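/- Let t ≥ 1 be a natural number, σ > 0, δ ∈ (0,1), and suppose ρ ≥ 1/√t + σ · Φ⁻¹((1 − δ/2)^{1/t}), where Φ⁻¹ is the inverse on (0,1) of the standard Gaussian CDF Φ. Then, under the product measure of t independent copies of gaussianReal 0 σ² on Fin t → ℝ, the probability of the event {Z : ∃ i, 1/√t + Z i > ρ} is at most δ/2. In particular this holds for ρ = ρ_1 := max_{1 ≤ t' ≤ Δ} (1/√t' + σ · Φ⁻¹((1 − δ/2)^{1/t'})) whenever t ≤ Δ. -/

import Mathlib

open MeasureTheory ProbabilityTheory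

noncomputable def stdGaussianCDF (x : ℝ) : ℝ := (gaussianReal 0 1 (Set.Iic x)).toReal

lemma gauss_scaled_Iic {σ : ℝ} (hσ : 0 < σ) (c : ℝ) :
    gaussianReal 0 (Real.toNNReal (σ ^ 2)) (Set.Iic c)
      = ENNReal.ofReal (stdGaussianCDF (c / σ)) := by
  have hmap := gaussianReal_map_const_mul (μ := 0) (v := 1) σ
  have hv : (NNReal.mk (σ^2) (sq_nonneg _) * 1 : NNReal) = Real.toNNReal (σ ^ 2) := by
    ext; simp [Real.toNNReal, max_eq_left (sq_nonneg σ)]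
  rw [mul_zero, hv] at hmap
  rw [← hmap, Measure.map_apply (measurable_id'.const_mul σ) measurableSet_Iic]
  have hpre : (σ * ·) ⁻¹' Set.Iic c = Set.Iic (c / σ) := by
    ext x
    simp [Set.mem_Iic, ← le_div_iff₀' hσ]
  rw [hpre, stdGaussianCDF, ENNReal.ofReal_toReal (measure_ne_top _ _)]

lemma stdGaussianCDF_mono : Monotone stdGaussianCDF := fun a b hab =>
  ENNReal.toReal_mono (measure_ne_top _ _) (measure_mono (Set.Iic_subset_Iic.mpr hab))

theorem dpsu_threshold_privacy (t : ℕ) (ht : 1 ≤ t) (σ : ℝ) (hσ : 0 < σ)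
    (δ : ℝ) (hδ0 : 0 < δ) (hδ1 : δ < 1)
    (Φinv : ℝ → ℝ) (hinv₁ : ∀ x : ℝ, Φinv (stdGaussianCDF x) = x)
    (hinv₂ : ∀ y : ℝ, 0 < y → y < 1 → stdGaussianCDF (Φinv y) = y)
    (ρ : ℝ) (hρ : 1 / Real.sqrt t + σ * Φinv ((1 - δ / 2) ^ ((1 : ℝ) / t)) ≤ ρ) :
    Measure.pi (fun _ : Fin t => gaussianReal 0 (Real.toNNReal (σ ^ 2)))
        {Z : Fin t → ℝ | ∃ i, 1 / Real.sqrt t + Z i > ρ} ≤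
      ENNReal.ofReal (δ / 2) := by
  set μ := Measure.pi (fun _ : Fin t => gaussianReal 0 (Real.toNNReal (σ ^ 2))) with hμ
  set c : ℝ := ρ - 1 / Real.sqrt t with hc
  set y : ℝ := (1 - δ / 2) ^ ((1 : ℝ) / t) with hy
  have hbase0 : (0:ℝ) < 1 - δ / 2 := by linarith
  have hbase1 : (1:ℝ) - δ / 2 < 1 := by linarith
  have ht0 : (0:ℝ) < (t:ℝ) := by exact_mod_cast ht
  have hy0 : 0 < y := Real.rpow_pos_of_pos hbase0 _
  have hy1 : y < 1 := Real.rpow_lt_one hbase0.le hbase1 (by positivity)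
  -- event as complement of a box
  have hset : {Z : Fin t → ℝ | ∃ i, 1 / Real.sqrt t + Z i > ρ}
      = (Set.pi Set.univ (fun _ : Fin t => Set.Iic c))ᶜ := by
    ext Z
    simp only [Set.mem_compl_iff, Set.mem_pi, Set.mem_univ, forall_true_left, Set.mem_Iic,
      Set.mem_setOf_eq, not_forall]
    constructor
    · rintro ⟨i, hi⟩; exact ⟨i, by push_neg; simp only [hc]; linarith⟩
    · rintro ⟨i, hi⟩; push_neg at hi; simp only [hc] at hi; exact ⟨i, by linarith⟩
  have hmbox : MeasurableSet (Set.pi Set.univ (fun _ : Fin t => Set.Iic c)) :=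
    MeasurableSet.univ_pi (fun _ => measurableSet_Iic)
  have hone : gaussianReal 0 (Real.toNNReal (σ ^ 2)) (Set.Iic c) = ENNReal.ofReal (stdGaussianCDF (c / σ)) :=
    gauss_scaled_Iic hσ c
  have hbox : μ (Set.pi Set.univ (fun _ : Fin t => Set.Iic c))
      = ENNReal.ofReal (stdGaussianCDF (c / σ)) ^ t := by
    rw [hμ, Measure.pi_pi]
    simp [hone]
  -- stdGaussianCDF (c/σ) ≥ y
  have hcσ : Φinv y ≤ c / σ := by
    rw [le_div_iff₀ hσ]
    have : σ * Φinv y ≤ c := by rw [hc]; linarith [hρ]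
    linarith [this]
  have hCDF : y ≤ stdGaussianCDF (c / σ) := by
    calc y = stdGaussianCDF (Φinv y) := (hinv₂ y hy0 hy1).symm
    _ ≤ stdGaussianCDF (c / σ) := stdGaussianCDF_mono hcσ
  have hyt : y ^ t = 1 - δ / 2 := by
    rw [hy, ← Real.rpow_natCast _ t, ← Real.rpow_mul hbase0.le]
    rw [one_div, inv_mul_cancel₀ (ne_of_gt ht0), Real.rpow_one]
  have hboxge : ENNReal.ofReal (1 - δ / 2) ≤ μ (Set.pi Set.univ (fun _ : Fin t => Set.Iic c)) := by
    have hnn : 0 ≤ stdGaussianCDF (c / σ) := ENNReal.toReal_nonneg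
    rw [hbox, ← ENNReal.ofReal_pow hnn, ← hyt]
    exact ENNReal.ofReal_le_ofReal (pow_le_pow_left₀ hy0.le hCDF t)
  have : IsProbabilityMeasure μ := by
    rw [hμ]; infer_instance
  rw [hset, measure_compl hmbox (measure_ne_top _ _), measure_univ]
  calc 1 - μ (Set.pi Set.univ (fun _ : Fin t => Set.Iic c))
      ≤ 1 - ENNReal.ofReal (1 - δ / 2) := tsub_le_tsub_left hboxge 1
    _ = ENNReal.ofReal (δ / 2) := by
        rw [← ENNReal.ofReal_one, ← ENNReal.ofReal_sub _ (by linarith)]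
        norm_num
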